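/- Let λ₁, λ₂ ≥ 0 with λ₁λ₂ < 1, and let R₁, R₂ : H → H be λ₁-conic and λ₂-conic, respectively. Then the composition R₂ ∘ R₁ is λ-conic with λ = (λ₁ + λ₂ - 2λ₁λ₂)/(1 - λ₁λ₂). -/

import Mathlib

open scoped RealInnerProductSpace

/-- Scalar nonnegativity of the conic parameter of the composition. -/
lemma conic_num_nonneg (l1 l2 : ℝ) (h1 : 0 ≤ l1) (h2 : 0 ≤ l2) (h12 : l1 * l2 < 1) :
    0 ≤ l1 + l2 - 2 * l1 * l2 := by
  nlinarith [sq_nonneg (l1 - l2), sq_nonneg (l1 + l2), mul_nonneg h1 h2,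
    sq_nonneg (l1 * l2 - 1), sq_nonneg (l1 - 1), sq_nonneg (l2 - 1),
    mul_nonneg (mul_nonneg h1 h2) (mul_nonneg h1 h2)]

/-- The key norm inequality. -/
lemma conic_key {H : Type*} [NormedAddCommGroup H] [InnerProductSpace ℝ H]
    (l1 l2 : ℝ) (h1 : 0 ≤ l1) (h2 : 0 ≤ l2) (h12 : l1 * l2 < 1)
    (u n m : H) (hn : ‖n‖ ≤ ‖u‖) (hm : ‖m‖ ≤ ‖(1 - l1) • u + l1 • n‖) :
    ‖((l1 + l2 - 2 * l1 * l2) - (1 - l1 * l2)) • u +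
      (1 - l1 * l2) • ((1 - l2) • ((1 - l1) • u + l1 • n) + l2 • m)‖ ≤
      (l1 + l2 - 2 * l1 * l2) * ‖u‖ := by
  have hs : 0 < 1 - l1 * l2 := by linarith
  have hnum := conic_num_nonneg l1 l2 h1 h2 h12
  have expand : ∀ α β γ : ℝ, ‖α • u + β • n + γ • m‖ ^ 2 =
      α ^ 2 * ⟪u, u⟫ + β ^ 2 * ⟪n, n⟫ + γ ^ 2 * ⟪m, m⟫ +
      2 * (α * β) * ⟪u, n⟫ + 2 * (α * γ) * ⟪u, m⟫ + 2 * (β * γ) * ⟪n, m⟫ := by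
    intro α β γ
    rw [← real_inner_self_eq_norm_sq]
    simp only [inner_add_left, inner_add_right, real_inner_smul_left, real_inner_smul_right,
      real_inner_comm n u, real_inner_comm m u, real_inner_comm m n]
    ring
  set s : ℝ := 1 - l1 * l2 with hsdef
  set c : ℝ := l1 + l2 - 2 * l1 * l2 with hcdef
  refine le_of_pow_le_pow_left₀ two_ne_zero (by positivity) ?_
  -- rewrite the LHS squared norm
  have hv : (c - s) • u + s • ((1 - l2) • ((1 - l1) • u + l1 • n) + l2 • m) =
      ((c - s) + s * ((1 - l2) * (1 - l1))) • u + (s * ((1 - l2) * l1)) • n + (s * l2) • m := by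
    module
  have hva : (1 - l1) • u + l1 • n = (1 - l1) • u + l1 • n + (0 : ℝ) • m := by module
  have hw : (1 - l1) • (u - n) - (1 - l2) • (((1 - l1) • u + l1 • n) - m) =
      ((1 - l1) * l2) • u + (-(1 - l1) - (1 - l2) * l1) • n + (1 - l2) • m := by module
  have hn2 : ⟪n, n⟫ ≤ ⟪u, u⟫ := by
    rw [real_inner_self_eq_norm_sq, real_inner_self_eq_norm_sq]
    exact pow_le_pow_left₀ (norm_nonneg n) hn 2
  have hm2 : ‖m‖ ^ 2 ≤
      (1 - l1) ^ 2 * ⟪u, u⟫ + l1 ^ 2 * ⟪n, n⟫ + 0 ^ 2 * ⟪m, m⟫ +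
      2 * ((1 - l1) * l1) * ⟪u, n⟫ + 2 * ((1 - l1) * 0) * ⟪u, m⟫ +
      2 * (l1 * 0) * ⟪n, m⟫ := by
    rw [← expand]
    rw [← hva]
    exact pow_le_pow_left₀ (norm_nonneg m) hm 2
  have hmm : ‖m‖ ^ 2 = ⟪m, m⟫ := (real_inner_self_eq_norm_sq m).symm
  have hW : (0 : ℝ) ≤
      ((1 - l1) * l2) ^ 2 * ⟪u, u⟫ + (-(1 - l1) - (1 - l2) * l1) ^ 2 * ⟪n, n⟫ +
      (1 - l2) ^ 2 * ⟪m, m⟫ + 2 * (((1 - l1) * l2) * (-(1 - l1) - (1 - l2) * l1)) * ⟪u, n⟫ +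
      2 * (((1 - l1) * l2) * (1 - l2)) * ⟪u, m⟫ +
      2 * ((-(1 - l1) - (1 - l2) * l1) * (1 - l2)) * ⟪n, m⟫ := by
    rw [← expand]
    positivity
  have hcu : (c * ‖u‖) ^ 2 = c ^ 2 * ⟪u, u⟫ := by rw [mul_pow, real_inner_self_eq_norm_sq]
  rw [hv, expand, hcu]
  rw [hmm] at hm2
  simp only [hsdef, hcdef]
  rw [hsdef] at hs
  rw [hcdef] at hnum
  nlinarith [mul_nonneg (mul_nonneg (mul_nonneg hs.le hnum) h1) (sub_nonneg.2 hn2),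
    mul_nonneg (mul_nonneg (mul_nonneg hs.le hnum) h2) (sub_nonneg.2 hm2),
    mul_nonneg (mul_nonneg (mul_nonneg hs.le h1) h2) hW]

theorem conic_composition
    {H : Type*} [NormedAddCommGroup H] [InnerProductSpace ℝ H] [CompleteSpace H]
    (l1 l2 : ℝ) (h1 : 0 ≤ l1) (h2 : 0 ≤ l2) (h12 : l1 * l2 < 1)
    (R1 R2 : H → H)
    (hR1 : ∃ N : H → H, LipschitzWith 1 N ∧
      R1 = fun x => (1 - l1) • x + l1 • N x)
    (hR2 : ∃ N : H → H, LipschitzWith 1 N ∧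
      R2 = fun x => (1 - l2) • x + l2 • N x) :
    ∃ N : H → H, LipschitzWith 1 N ∧
      (R2 ∘ R1) = fun x =>
        (1 - (l1 + l2 - 2 * l1 * l2) / (1 - l1 * l2)) • x +
          ((l1 + l2 - 2 * l1 * l2) / (1 - l1 * l2)) • N x := by
  obtain ⟨N1, hN1, hR1e⟩ := hR1
  obtain ⟨N2, hN2, hR2e⟩ := hR2
  have hs : 0 < 1 - l1 * l2 := by linarith
  have hnum : 0 ≤ l1 + l2 - 2 * l1 * l2 := conic_num_nonneg l1 l2 h1 h2 h12
  set lam : ℝ := (l1 + l2 - 2 * l1 * l2) / (1 - l1 * l2) with hlamdef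
  by_cases hz : l1 + l2 - 2 * l1 * l2 = 0
  · -- degenerate case: l1 = l2 = 0
    have hp : l1 * l2 = 0 := by nlinarith [sq_nonneg (l1 - l2)]
    have hl1 : l1 = 0 := by nlinarith
    have hl2 : l2 = 0 := by nlinarith
    refine ⟨N1, hN1, ?_⟩
    funext x
    simp [Function.comp, hR1e, hR2e, hl1, hl2, hlamdef]
  · have hnum' : 0 < l1 + l2 - 2 * l1 * l2 := lt_of_le_of_ne hnum (Ne.symm hz)
    have hlam : 0 < lam := div_pos hnum' hs
    refine ⟨fun x => x + lam⁻¹ • (R2 (R1 x) - x), ?_, ?_⟩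
    · -- Lipschitz
      refine LipschitzWith.of_dist_le_mul fun x y => ?_
      rw [dist_eq_norm, dist_eq_norm, NNReal.coe_one, one_mul]
      set u : H := x - y with hu
      set n : H := N1 x - N1 y with hn
      set m : H := N2 (R1 x) - N2 (R1 y) with hm
      have hnle : ‖n‖ ≤ ‖u‖ := by
        have := hN1.dist_le_mul x y
        rwa [dist_eq_norm, dist_eq_norm, NNReal.coe_one, one_mul] at this
      have hR1d : R1 x - R1 y = (1 - l1) • u + l1 • n := by
        rw [hR1e]; simp only [hu, hn]; module
      have hmle : ‖m‖ ≤ ‖(1 - l1) • u + l1 • n‖ := by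
        rw [← hR1d]
        have := hN2.dist_le_mul (R1 x) (R1 y)
        rwa [dist_eq_norm, dist_eq_norm, NNReal.coe_one, one_mul] at this
      have hR2d : R2 (R1 x) - R2 (R1 y) = (1 - l2) • ((1 - l1) • u + l1 • n) + l2 • m := by
        rw [hR2e, ← hR1d]; simp only [hm]; module
      have key := conic_key l1 l2 h1 h2 h12 u n m hnle hmle
      have hveq : x + lam⁻¹ • (R2 (R1 x) - x) - (y + lam⁻¹ • (R2 (R1 y) - y)) =
          ((1 - l1 * l2) * lam)⁻¹ •
            (((l1 + l2 - 2 * l1 * l2) - (1 - l1 * l2)) • u +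
              (1 - l1 * l2) • ((1 - l2) • ((1 - l1) • u + l1 • n) + l2 • m)) := by
        rw [← hR2d]
        have hln : ((1 - l1 * l2) * lam) = l1 + l2 - 2 * l1 * l2 := by
          rw [hlamdef]; field_simp
        rw [hln]
        have h3 : (l1 + l2 - 2 * l1 * l2 : ℝ) ≠ 0 := hz
        have hlamne : lam ≠ 0 := ne_of_gt hlam
        have hx : lam⁻¹ = (1 - l1 * l2) / (l1 + l2 - 2 * l1 * l2) := by
          rw [hlamdef]; rw [inv_div]
        rw [hx]
        have hu' : u = x - y := hu
        have h3' : l1 - l1 * l2 * 2 + l2 ≠ 0 := by contrapose! h3; linarith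
        match_scalars <;> (field_simp; try ring) <;> linarith [mul_inv_cancel₀ h3']
      rw [hveq, norm_smul]
      have hpos : (0:ℝ) < (1 - l1 * l2) * lam := mul_pos hs hlam
      rw [Real.norm_eq_abs, abs_inv, abs_of_pos hpos]
      rw [inv_mul_le_iff₀ hpos]
      calc ‖((l1 + l2 - 2 * l1 * l2) - (1 - l1 * l2)) • u +
              (1 - l1 * l2) • ((1 - l2) • ((1 - l1) • u + l1 • n) + l2 • m)‖
          ≤ (l1 + l2 - 2 * l1 * l2) * ‖u‖ := key
        _ = (1 - l1 * l2) * lam * ‖x - y‖ := by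
            rw [hlamdef]; field_simp; try ring
    · funext x
      simp only [Function.comp]
      rw [smul_add, smul_smul, mul_inv_cancel₀ (ne_of_gt hlam), one_smul, sub_smul, one_smul]
      abel
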